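/- Let μ ≥ ν > 0 and define the map Ω⁻¹ : ℍ → ℝ × (0,∞) on the open upper half plane by Ω⁻¹(z) = (x(z), y(z)) with x(z) = |z|(μ+ν) + 2√(μν) Re(z) and y(z) = |z|. Then Ω⁻¹ is injective and its image is the set {(x,y) : y > 0, y(√μ - √ν)² < x < y(√μ + √ν)²}. -/

import Mathlib

open Complex Set

/-- For `μ ≥ ν > 0`, the map `Ω⁻¹(z) = (|z|(μ+ν) + 2√(μν) Re z, |z|)` is
injective on the open upper half plane, and its image is
`{(x,y) : y > 0, y(√μ - √ν)² < x < y(√μ + √ν)²}`. -/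
theorem stmt10 (μ ν : ℝ) (hν : 0 < ν) (hμν : ν ≤ μ)
    (f : ℂ → ℝ × ℝ)
    (hf : ∀ z : ℂ, f z =
      (‖z‖ * (μ + ν) + 2 * Real.sqrt (μ * ν) * z.re, ‖z‖)) :
    Set.InjOn f {z : ℂ | 0 < z.im} ∧
      f '' {z : ℂ | 0 < z.im} =
        {p : ℝ × ℝ | 0 < p.2 ∧
          p.2 * (Real.sqrt μ - Real.sqrt ν) ^ 2 < p.1 ∧
          p.1 < p.2 * (Real.sqrt μ + Real.sqrt ν) ^ 2} := by
  have hμ : 0 < μ := lt_of_lt_of_le hν hμν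
  have hs : 0 < Real.sqrt (μ * ν) := Real.sqrt_pos.2 (mul_pos hμ hν)
  have hsm : Real.sqrt μ * Real.sqrt ν = Real.sqrt (μ * ν) := (Real.sqrt_mul hμ.le ν).symm
  have hsub : (Real.sqrt μ - Real.sqrt ν) ^ 2 = μ + ν - 2 * Real.sqrt (μ * ν) := by
    have h1 := Real.sq_sqrt hμ.le
    have h2 := Real.sq_sqrt hν.le
    nlinarith [hsm]
  have hadd : (Real.sqrt μ + Real.sqrt ν) ^ 2 = μ + ν + 2 * Real.sqrt (μ * ν) := by
    have h1 := Real.sq_sqrt hμ.le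
    have h2 := Real.sq_sqrt hν.le
    nlinarith [hsm]
  constructor
  · intro z hz w hw h
    rw [hf z, hf w, Prod.mk.injEq] at h
    obtain ⟨h1, h2⟩ := h
    have hre : z.re = w.re := by
      rw [h2] at h1
      have : 2 * Real.sqrt (μ * ν) * z.re = 2 * Real.sqrt (μ * ν) * w.re := by linarith
      have h2s : (2 : ℝ) * Real.sqrt (μ * ν) ≠ 0 := by positivity
      exact mul_left_cancel₀ h2s this
    have hsq : z.im ^ 2 = w.im ^ 2 := by
      have hz2 := Complex.sq_norm z
      have hw2 := Complex.sq_norm w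
      rw [h2] at hz2
      rw [Complex.normSq_apply] at hz2 hw2
      rw [hre] at hz2
      nlinarith [hz2, hw2]
    have him : z.im = w.im := by
      have hz' : 0 < z.im := hz
      have hw' : 0 < w.im := hw
      nlinarith
    exact Complex.ext hre him
  · ext ⟨x, y⟩
    simp only [mem_image, mem_setOf_eq, hf, Prod.mk.injEq]
    constructor
    · rintro ⟨z, hz, h1, h2⟩
      have hre : |z.re| < ‖z‖ := Complex.abs_re_lt_norm.2 (ne_of_gt hz)
      obtain ⟨hl, hr⟩ := abs_lt.1 hre
      have hy : 0 < y := by rw [← h2]; exact lt_of_le_of_lt (abs_nonneg _) hre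
      refine ⟨hy, ?_, ?_⟩
      · rw [← h1, ← h2, hsub]; nlinarith
      · rw [← h1, ← h2, hadd]; nlinarith
    · rintro ⟨hy, hlt1, hlt2⟩
      set r : ℝ := (x - y * (μ + ν)) / (2 * Real.sqrt (μ * ν)) with hrdef
      have h2s : (0 : ℝ) < 2 * Real.sqrt (μ * ν) := by positivity
      have hr1 : -y < r := by
        rw [hrdef, lt_div_iff₀ h2s]
        rw [hsub] at hlt1; nlinarith
      have hr2 : r < y := by
        rw [hrdef, div_lt_iff₀ h2s]
        rw [hadd] at hlt2; nlinarith
      have hpos : 0 < y ^ 2 - r ^ 2 := by nlinarith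
      set t : ℝ := Real.sqrt (y ^ 2 - r ^ 2) with htdef
      have ht : 0 < t := Real.sqrt_pos.2 hpos
      have ht2 : t ^ 2 = y ^ 2 - r ^ 2 := Real.sq_sqrt hpos.le
      have habs : ‖(⟨r, t⟩ : ℂ)‖ = y := by
        rw [Complex.norm_def, Complex.normSq_mk]
        have hrt : r * r + t * t = y ^ 2 := by nlinarith
        rw [hrt, Real.sqrt_sq hy.le]
      refine ⟨⟨r, t⟩, ht, ?_, habs⟩
      rw [habs]
      show y * (μ + ν) + 2 * Real.sqrt (μ * ν) * r = x
      rw [hrdef]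
      field_simp
      ring
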